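/- Suppose Assumptions ALLlip and ADlip hold. Then there exists a constant c̄0 > 0, depending only on d, β and the constants L̄1, L̄2, L̄3, ā, b̄ (and on |h(0)|), such that for every θ ∈ ℝ^d, every 0 < λ ≤ λ̄_max, and ξ a standard d-dimensional Gaussian vector (law N(0, I_d)): E|θ + λ φ_Lin^λ(θ) + √(2λβ^{−1}) ψ_Lin^λ(θ) ξ|² ≤ (1 − λ ā)|θ|² + λ c̄0. -/

import Mathlib

open MeasureTheory ProbabilityTheory Real
open scoped RealInnerProductSpace ENNReal NNReal BigOperators

noncomputable section

/-- `h := ∇U`, the gradient of `U`. -/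
def grad {d : ℕ} (U : EuclideanSpace ℝ (Fin d) → ℝ) (θ : EuclideanSpace ℝ (Fin d)) :
    EuclideanSpace ℝ (Fin d) :=
  gradient U θ

/-- `H := ∇²U`, the Hessian of `U`, as a continuous linear map. -/
def hess {d : ℕ} (U : EuclideanSpace ℝ (Fin d) → ℝ) (θ : EuclideanSpace ℝ (Fin d)) :
    EuclideanSpace ℝ (Fin d) →L[ℝ] EuclideanSpace ℝ (Fin d) :=
  fderiv ℝ (fun x => gradient U x) θ

/-- `∇ h^{(i)}`, the gradient of the `i`-th component of `h = ∇U`. -/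
def gradComp {d : ℕ} (U : EuclideanSpace ℝ (Fin d) → ℝ) (i : Fin d)
    (θ : EuclideanSpace ℝ (Fin d)) : EuclideanSpace ℝ (Fin d) :=
  gradient (fun y => gradient U y i) θ

/-- `∇² h^{(i)}`, the Hessian of the `i`-th component of `h = ∇U`. -/
def hessComp {d : ℕ} (U : EuclideanSpace ℝ (Fin d) → ℝ) (i : Fin d)
    (θ : EuclideanSpace ℝ (Fin d)) :
    EuclideanSpace ℝ (Fin d) →L[ℝ] EuclideanSpace ℝ (Fin d) :=
  fderiv ℝ (fun x => gradComp U i x) θ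

/-- `Υ`, the vector Laplacian of `h = ∇U`:  `Υ^{(i)}(θ) = ∑_j ∂²_{θ^{(j)}} h^{(i)}(θ)`. -/
def vecLap {d : ℕ} (U : EuclideanSpace ℝ (Fin d) → ℝ) (θ : EuclideanSpace ℝ (Fin d)) :
    EuclideanSpace ℝ (Fin d) :=
  (EuclideanSpace.equiv (Fin d) ℝ).symm
    (fun i => ∑ j, hessComp U i θ (EuclideanSpace.single j 1) j)

/-- The standard Gaussian measure `N(0, I_d)` on `ℝ^d`. -/
def stdGaussian (d : ℕ) : Measure (EuclideanSpace ℝ (Fin d)) :=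
  Measure.map (EuclideanSpace.equiv (Fin d) ℝ).symm
    (Measure.pi fun _ : Fin d => gaussianReal 0 1)

/-- `T` is a symmetric positive semidefinite square root of `M`. -/
def IsPsdSqrt {d : ℕ}
    (T M : EuclideanSpace ℝ (Fin d) →L[ℝ] EuclideanSpace ℝ (Fin d)) : Prop :=
  (∀ v w, ⟪T v, w⟫ = ⟪v, T w⟫) ∧ (∀ v, 0 ≤ ⟪T v, v⟫) ∧ T.comp T = M

/-- The aHOLLA drift `φ_Lin^λ(θ) = -h(θ) + (λ/2)(H(θ) h(θ) - β⁻¹ Υ(θ))`. -/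
def hollaDrift {d : ℕ} (U : EuclideanSpace ℝ (Fin d) → ℝ) (β lam : ℝ)
    (θ : EuclideanSpace ℝ (Fin d)) : EuclideanSpace ℝ (Fin d) :=
  -grad U θ + (lam / 2) • (hess U θ (grad U θ) - β⁻¹ • vecLap U θ)

/-- `I_d - λ H(θ) + (λ²/3) H(θ)²`, the square of `ψ_Lin^λ(θ)`. -/
def hollaCov {d : ℕ} (U : EuclideanSpace ℝ (Fin d) → ℝ) (lam : ℝ)
    (θ : EuclideanSpace ℝ (Fin d)) :
    EuclideanSpace ℝ (Fin d) →L[ℝ] EuclideanSpace ℝ (Fin d) :=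
  ContinuousLinearMap.id ℝ _ - lam • hess U θ
    + (lam ^ 2 / 3) • ((hess U θ).comp (hess U θ))

/-- The aHOLLA chain
`Θ_{n+1} = Θ_n + λ φ_Lin^λ(Θ_n) + √(2λ/β) ψ_Lin^λ(Θ_n) ξ_{n+1}`. -/
def hollaChain {d : ℕ} {Ω : Type*} (U : EuclideanSpace ℝ (Fin d) → ℝ) (β lam : ℝ)
    (ψ : EuclideanSpace ℝ (Fin d) → (EuclideanSpace ℝ (Fin d) →L[ℝ] EuclideanSpace ℝ (Fin d)))
    (θ0 : Ω → EuclideanSpace ℝ (Fin d)) (ξ : ℕ → Ω → EuclideanSpace ℝ (Fin d)) :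
    ℕ → Ω → EuclideanSpace ℝ (Fin d)
  | 0 => θ0
  | n + 1 => fun ω =>
      hollaChain U β lam ψ θ0 ξ n ω
        + lam • hollaDrift U β lam (hollaChain U β lam ψ θ0 ξ n ω)
        + Real.sqrt (2 * lam * β⁻¹) • ψ (hollaChain U β lam ψ θ0 ξ n ω) (ξ n ω)

/-- The maximal step size `λ̄_max` for aHOLLA, with `K̄1 = max{L̄3, |h(0)|}` as input. -/
def lamMaxLin (abar L3 K1 : ℝ) : ℝ :=
  min 1 (min abar⁻¹
    (min (abar / (16 * L3 * K1))
      (min (abar / (16 * K1 ^ 2))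
        (min (abar ^ ((1 : ℝ) / 3) / (4 * L3 ^ 2 * K1 ^ 2) ^ ((1 : ℝ) / 3))
          (abar ^ ((1 : ℝ) / 2) / (16 * L3 * K1 ^ 2) ^ ((1 : ℝ) / 3))))))


set_option synthInstance.maxHeartbeats 1000000
set_option maxHeartbeats 2000000

namespace AhollaAux

open Filter

/-! ### One-dimensional Gaussian moments -/

def gPdf (x : ℝ) : ℝ := (Real.sqrt (2*π))⁻¹ * Real.exp (-(x^2)/2)

lemma gPdf_nonneg (x : ℝ) : 0 ≤ gPdf x := by
  have := Real.exp_nonneg (-(x^2)/2)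
  have h2 : (0:ℝ) ≤ (Real.sqrt (2*π))⁻¹ := by positivity
  exact mul_nonneg h2 this

lemma gPdf_cont : Continuous gPdf := by
  unfold gPdf; fun_prop

lemma gauss_eq_density :
    gaussianReal 0 1 = volume.withDensity (fun x => ENNReal.ofReal (gPdf x)) := by
  rw [gaussianReal_of_var_ne_zero 0 one_ne_zero]
  congr 1
  funext x
  rw [gaussianPDF_def]
  congr 1
  simp [gaussianPDFReal, gPdf]

lemma integrable_gauss_iff (g : ℝ → ℝ) :
    Integrable g (gaussianReal 0 1) ↔ Integrable (fun x => g x * gPdf x) volume := by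
  rw [gauss_eq_density]
  rw [integrable_withDensity_iff (gPdf_cont.measurable.ennreal_ofReal)
    (Filter.Eventually.of_forall fun x => ENNReal.ofReal_lt_top)]
  simp_rw [ENNReal.toReal_ofReal (gPdf_nonneg _)]

lemma integral_gauss_eq (g : ℝ → ℝ) :
    ∫ x, g x ∂(gaussianReal 0 1) = ∫ x, g x * gPdf x := by
  rw [gauss_eq_density]
  have hm : Measurable (fun x => (gPdf x).toNNReal) := gPdf_cont.measurable.real_toNNReal
  rw [show (fun x => ENNReal.ofReal (gPdf x)) = (fun x => ((gPdf x).toNNReal : ℝ≥0∞)) from rfl]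
  rw [integral_withDensity_eq_integral_smul hm g]
  congr 1; funext x
  rw [NNReal.smul_def, smul_eq_mul, Real.coe_toNNReal _ (gPdf_nonneg x), mul_comm]

lemma integrable_id_gauss : Integrable (fun x : ℝ => x) (gaussianReal 0 1) := by
  rw [integrable_gauss_iff]
  have h : Integrable (fun x : ℝ => (Real.sqrt (2*π))⁻¹ * (x * Real.exp (-(1/2) * x^2))) volume :=
    (integrable_mul_exp_neg_mul_sq (by norm_num : (0:ℝ) < 1/2)).const_mul _
  refine h.congr (Filter.Eventually.of_forall fun x => ?_)
  unfold gPdf; ring_nf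

lemma integrable_sq_gauss : Integrable (fun x : ℝ => x^2) (gaussianReal 0 1) := by
  rw [integrable_gauss_iff]
  have h : Integrable (fun x : ℝ => (4 * (Real.sqrt (2*π))⁻¹) * Real.exp (-(1/4) * x^2)) volume :=
    (integrable_exp_neg_mul_sq (by norm_num : (0:ℝ) < 1/4)).const_mul _
  refine h.mono' ?_ (Filter.Eventually.of_forall fun x => ?_)
  · exact ((continuous_pow 2).mul gPdf_cont).aestronglyMeasurable
  · have hb : x^2/4 ≤ Real.exp (x^2/4) :=
      le_trans (by linarith [Real.add_one_le_exp (x^2/4)]) (le_refl _)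
    have hsplit : Real.exp (-(x^2)/2) = Real.exp (-(x^2)/4) * Real.exp (-(x^2)/4) := by
      rw [← Real.exp_add]; ring_nf
    have h1 : x^2 * Real.exp (-(x^2)/2) ≤ 4 * Real.exp (-(1/4) * x^2) := by
      rw [hsplit]
      have e1 : x^2 * (Real.exp (-(x^2)/4) * Real.exp (-(x^2)/4))
          = 4 * ((x^2/4) * Real.exp (-(x^2)/4)) * Real.exp (-(x^2)/4) := by ring
      rw [e1]
      have h2 : (x^2/4) * Real.exp (-(x^2)/4) ≤ 1 := by
        calc (x^2/4) * Real.exp (-(x^2)/4) ≤ Real.exp (x^2/4) * Real.exp (-(x^2)/4) :=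
              mul_le_mul_of_nonneg_right hb (Real.exp_nonneg _)
          _ = 1 := by rw [← Real.exp_add]; ring_nf; exact Real.exp_zero
      calc 4 * ((x^2/4) * Real.exp (-(x^2)/4)) * Real.exp (-(x^2)/4)
          ≤ 4 * 1 * Real.exp (-(x^2)/4) := by
            apply mul_le_mul_of_nonneg_right _ (Real.exp_nonneg _)
            nlinarith [Real.exp_nonneg (-(x^2)/4), sq_nonneg x, h2]
        _ = 4 * Real.exp (-(1/4) * x^2) := by ring_nf
    have hnn : 0 ≤ x^2 * gPdf x := mul_nonneg (sq_nonneg x) (gPdf_nonneg x)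
    rw [Real.norm_of_nonneg hnn]
    unfold gPdf
    calc x^2 * ((Real.sqrt (2*π))⁻¹ * Real.exp (-(x^2)/2))
        = (Real.sqrt (2*π))⁻¹ * (x^2 * Real.exp (-(x^2)/2)) := by ring
      _ ≤ (Real.sqrt (2*π))⁻¹ * (4 * Real.exp (-(1/4) * x^2)) := by
          apply mul_le_mul_of_nonneg_left h1 (by positivity)
      _ = 4 * (Real.sqrt (2*π))⁻¹ * Real.exp (-(1/4) * x^2) := by ring

lemma integral_id_gauss : ∫ x, x ∂(gaussianReal 0 1) = 0 := by
  rw [integral_gauss_eq]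
  have hodd : ∀ x : ℝ, (-x) * gPdf (-x) = -(x * gPdf x) := by
    intro x; unfold gPdf; ring_nf
  have hmp := (Measure.measurePreserving_neg (volume : Measure ℝ)).integral_comp
      (Homeomorph.neg ℝ).measurableEmbedding (fun x => x * gPdf x)
  have : ∫ x : ℝ, x * gPdf x = - ∫ x : ℝ, x * gPdf x := by
    calc ∫ x : ℝ, x * gPdf x = ∫ x : ℝ, (-x) * gPdf (-x) := hmp.symm
      _ = ∫ x : ℝ, -(x * gPdf x) := by simp_rw [hodd]
      _ = - ∫ x : ℝ, x * gPdf x := integral_neg _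
  linarith

def m2gauss : ℝ := ∫ x, x^2 ∂(gaussianReal 0 1)

lemma m2gauss_nonneg : 0 ≤ m2gauss := integral_nonneg fun x => sq_nonneg x

/-! ### Product Gaussian moments -/

def gms : MeasureSpace ℝ := ⟨gaussianReal 0 1⟩

def gnu (d : ℕ) : Measure (Fin d → ℝ) := Measure.pi fun _ => gaussianReal 0 1

instance (d : ℕ) : IsProbabilityMeasure (gnu d) := by
  unfold gnu; infer_instance

lemma gnu_prod_integral {d : ℕ} (f : Fin d → ℝ → ℝ) :
    ∫ x, (∏ i, f i (x i)) ∂(gnu d) = ∏ i, ∫ y, f i y ∂(gaussianReal 0 1) :=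
  MeasureTheory.integral_fintype_prod_eq_prod (𝕜 := ℝ) (ι := Fin d) f
    (μ := fun _ => gaussianReal 0 1)

lemma gnu_prod_integrable {d : ℕ} (f : Fin d → ℝ → ℝ)
    (hf : ∀ i, Integrable (f i) (gaussianReal 0 1)) :
    Integrable (fun x : Fin d → ℝ => ∏ i, f i (x i)) (gnu d) :=
  MeasureTheory.Integrable.fintype_prod (ι := Fin d) (f := f)
    (μ := fun _ => gaussianReal 0 1) hf

lemma integrable_eval {d : ℕ} (j : Fin d) : Integrable (fun x : Fin d → ℝ => x j) (gnu d) := by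
  have h := gnu_prod_integrable (fun i y => if i = j then y else 1) ?_
  · refine h.congr (Filter.Eventually.of_forall fun x => ?_)
    simp [Finset.prod_ite_eq']
  · intro i
    by_cases h : i = j
    · subst h; simpa using integrable_id_gauss
    · simp only [h, if_false]; exact integrable_const 1

lemma integral_eval {d : ℕ} (j : Fin d) : ∫ x, x j ∂(gnu d) = 0 := by
  have h := gnu_prod_integral (d := d) (fun i y => if i = j then y else 1)
  have he : (fun x : Fin d → ℝ => ∏ i, (if i = j then x i else 1)) = fun x => x j := by
    funext x; simp [Finset.prod_ite_eq']
  rw [he] at h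
  rw [h, Finset.prod_eq_zero (Finset.mem_univ j)]
  simp [integral_id_gauss]

lemma integrable_eval_mul {d : ℕ} (j k : Fin d) :
    Integrable (fun x : Fin d → ℝ => x j * x k) (gnu d) := by
  by_cases hjk : j = k
  · subst hjk
    have h := gnu_prod_integrable (fun i y => if i = j then y^2 else 1) ?_
    · refine h.congr (Filter.Eventually.of_forall fun x => ?_)
      simp [Finset.prod_ite_eq', sq]
    · intro i
      by_cases h : i = j
      · subst h; simpa using integrable_sq_gauss
      · simp only [h, if_false]; exact integrable_const 1
  · have h := gnu_prod_integrable
        (fun i y => (if i = j then y else 1) * (if i = k then y else 1)) ?_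
    · refine h.congr (Filter.Eventually.of_forall fun x => ?_)
      simp only [Finset.prod_mul_distrib]
      simp [Finset.prod_ite_eq']
    · intro i
      by_cases h1 : i = j
      · subst h1
        simpa [hjk] using integrable_id_gauss
      · by_cases h2 : i = k
        · subst h2
          simpa [h1] using integrable_id_gauss
        · simpa [h1, h2] using integrable_const (1:ℝ)

lemma integral_eval_mul {d : ℕ} (j k : Fin d) :
    ∫ x, x j * x k ∂(gnu d) = if j = k then m2gauss else 0 := by
  by_cases hjk : j = k
  · subst hjk
    have h := gnu_prod_integral (d := d) (fun i y => if i = j then y^2 else 1)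
    have he : (fun x : Fin d → ℝ => ∏ i, (if i = j then (x i)^2 else 1))
        = fun x => x j * x j := by
      funext x; simp [Finset.prod_ite_eq', sq]
    rw [he] at h
    rw [h, if_pos rfl]
    rw [Finset.prod_eq_single j (fun i _ hi => by simp [hi, integral_const]) (by simp)]
    simp [m2gauss]
  · have h := gnu_prod_integral (d := d)
        (fun i y => (if i = j then y else 1) * (if i = k then y else 1))
    have he : (fun x : Fin d → ℝ =>
        ∏ i, ((if i = j then x i else 1) * (if i = k then x i else 1)))
        = fun x => x j * x k := by
      funext x
      rw [Finset.prod_mul_distrib]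
      simp [Finset.prod_ite_eq']
    rw [he] at h
    rw [h, if_neg hjk, Finset.prod_eq_zero (Finset.mem_univ j)]
    simpa [hjk] using integral_id_gauss

/-! ### The Gaussian quadratic integral -/

lemma euclid_eq_sum_single {d : ℕ} (v : EuclideanSpace ℝ (Fin d)) :
    v = ∑ j, v j • EuclideanSpace.single j (1:ℝ) := by
  have h := (EuclideanSpace.basisFun (Fin d) ℝ).sum_repr v
  simp only [EuclideanSpace.basisFun_repr, EuclideanSpace.basisFun_apply] at h
  exact h.symm

lemma stdGaussian_eq_map (d : ℕ) :
    stdGaussian d = Measure.map (⇑(MeasurableEquiv.toLp 2 (Fin d → ℝ))) (gnu d) := rfl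

lemma gauss_quad (d : ℕ) (a : EuclideanSpace ℝ (Fin d)) (s : ℝ)
    (T : EuclideanSpace ℝ (Fin d) →L[ℝ] EuclideanSpace ℝ (Fin d)) :
    ∫⁻ x, (‖a + s • T x‖₊ : ℝ≥0∞) ^ (2:ℕ) ∂(stdGaussian d)
      = ENNReal.ofReal (‖a‖^2
          + s^2 * m2gauss * ∑ j, ‖T (EuclideanSpace.single j 1)‖^2) := by
  set u : Fin d → EuclideanSpace ℝ (Fin d) := fun j => T (EuclideanSpace.single j 1) with hu
  have hT : ∀ x : Fin d → ℝ,
      T ((MeasurableEquiv.toLp 2 (Fin d → ℝ)) x) = ∑ j, x j • u j := by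
    intro x
    have hv : ((MeasurableEquiv.toLp 2 (Fin d → ℝ)) x : EuclideanSpace ℝ (Fin d))
        = ∑ j, x j • EuclideanSpace.single j (1:ℝ) :=
      euclid_eq_sum_single ((MeasurableEquiv.toLp 2 (Fin d → ℝ)) x)
    rw [hv, map_sum]
    simp [hu]
  have hpt : ∀ x : Fin d → ℝ,
      ‖a + s • T ((MeasurableEquiv.toLp 2 (Fin d → ℝ)) x)‖^2
        = ‖a‖^2 + (∑ j, (2*s*⟪a, u j⟫) * x j)
          + (∑ j, ∑ k, (s^2*⟪u j, u k⟫) * (x j * x k)) := by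
    intro x
    rw [hT x, norm_add_sq_real]
    congr 1
    · congr 1
      rw [inner_smul_right, inner_sum]
      rw [Finset.mul_sum, Finset.mul_sum]
      congr 1; funext j
      rw [real_inner_smul_right]; ring
    · rw [norm_smul, mul_pow, Real.norm_eq_abs, sq_abs]
      rw [← real_inner_self_eq_norm_sq, sum_inner]
      rw [Finset.mul_sum]
      congr 1; funext j
      rw [real_inner_smul_left, inner_sum, Finset.mul_sum, Finset.mul_sum]
      congr 1; funext k
      rw [real_inner_smul_right]; ring
  have I2 : Integrable (fun x : Fin d → ℝ => ∑ j, (2*s*⟪a, u j⟫) * x j) (gnu d) :=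
    integrable_finset_sum _ fun j _ => (integrable_eval j).const_mul _
  have I3 : Integrable (fun x : Fin d → ℝ =>
      ∑ j, ∑ k, (s^2*⟪u j, u k⟫) * (x j * x k)) (gnu d) :=
    integrable_finset_sum _ fun j _ =>
      integrable_finset_sum _ fun k _ => (integrable_eval_mul j k).const_mul _
  have Itot : Integrable (fun x : Fin d → ℝ =>
      ‖a + s • T ((MeasurableEquiv.toLp 2 (Fin d → ℝ)) x)‖^2) (gnu d) := by
    have := ((integrable_const (‖a‖^2)).add I2).add I3
    refine this.congr (Filter.Eventually.of_forall fun x => ?_)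
    exact (hpt x).symm
  have hval : ∫ x, ‖a + s • T ((MeasurableEquiv.toLp 2 (Fin d → ℝ)) x)‖^2 ∂(gnu d)
      = ‖a‖^2 + s^2 * m2gauss * ∑ j, ‖u j‖^2 := by
    simp_rw [hpt]
    have IC : Integrable (fun x : Fin d → ℝ => ‖a‖^2 + ∑ j, (2*s*⟪a, u j⟫) * x j) (gnu d) :=
      ((integrable_const _).add I2).congr (Filter.Eventually.of_forall fun _ => rfl)
    rw [integral_add IC I3, integral_add (integrable_const _) I2, integral_const]
    simp only [measure_univ, ENNReal.toReal_one, smul_eq_mul, one_mul, probReal_univ]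
    rw [integral_finset_sum _ fun j _ => (integrable_eval j).const_mul _]
    rw [integral_finset_sum _ fun j _ =>
      integrable_finset_sum _ fun k _ => (integrable_eval_mul j k).const_mul _]
    have h2 : (∑ j, ∫ x, (2*s*⟪a, u j⟫) * x j ∂(gnu d)) = 0 :=
      Finset.sum_eq_zero fun j _ => by rw [integral_const_mul, integral_eval]; ring
    have h3 : (∑ j, ∫ x, ∑ k, (s^2*⟪u j, u k⟫) * (x j * x k) ∂(gnu d))
        = s^2 * m2gauss * ∑ j, ‖u j‖^2 := by
      rw [Finset.mul_sum]
      refine Finset.sum_congr rfl fun j _ => ?_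
      rw [integral_finset_sum _ fun k _ => (integrable_eval_mul j k).const_mul _]
      rw [Finset.sum_eq_single j]
      · rw [integral_const_mul, integral_eval_mul, if_pos rfl, real_inner_self_eq_norm_sq]
        ring
      · intro k _ hk
        rw [integral_const_mul, integral_eval_mul, if_neg (fun h => hk h.symm), mul_zero]
      · intro h; exact absurd (Finset.mem_univ j) h
    rw [h2, h3, add_zero]
  rw [stdGaussian_eq_map, lintegral_map_equiv
    (fun y => (‖a + s • T y‖₊ : ℝ≥0∞) ^ (2:ℕ)) (MeasurableEquiv.toLp 2 (Fin d → ℝ))]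
  have hconv : ∀ y : EuclideanSpace ℝ (Fin d),
      (‖a + s • T y‖₊ : ℝ≥0∞) ^ (2:ℕ) = ENNReal.ofReal (‖a + s • T y‖^2) := by
    intro y
    rw [ENNReal.ofReal_pow (norm_nonneg _), ofReal_norm, enorm_eq_nnnorm]
  simp_rw [hconv]
  rw [← ofReal_integral_eq_lintegral_ofReal Itot
    (Filter.Eventually.of_forall fun x => sq_nonneg _)]
  rw [hval]

/-! ### Calculus lemmas -/

lemma euclid_abs_comp_le_norm {d : ℕ} (v : EuclideanSpace ℝ (Fin d)) (i : Fin d) :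
    |v i| ≤ ‖v‖ := by
  have h1 : ⟪v, EuclideanSpace.single i (1:ℝ)⟫ = v i := by
    rw [EuclideanSpace.inner_single_right]; simp
  calc |v i| = |⟪v, EuclideanSpace.single i (1:ℝ)⟫| := by rw [h1]
    _ ≤ ‖v‖ * ‖EuclideanSpace.single i (1:ℝ)‖ := abs_real_inner_le_norm v _
    _ = ‖v‖ := by rw [EuclideanSpace.norm_single]; simp

lemma contDiff_grad {d : ℕ} {U : EuclideanSpace ℝ (Fin d) → ℝ} (hU : ContDiff ℝ 3 U) :
    ContDiff ℝ 2 (fun x => gradient U x) := by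
  have h := hU.fderiv_right (m := 2) (by norm_num)
  have hc : ContDiff ℝ 2 (fun ℓ : EuclideanSpace ℝ (Fin d) →L[ℝ] ℝ =>
      (InnerProductSpace.toDual ℝ (EuclideanSpace ℝ (Fin d))).symm ℓ) :=
    (InnerProductSpace.toDual ℝ (EuclideanSpace ℝ (Fin d))).symm.toContinuousLinearEquiv.contDiff
  exact hc.comp h

lemma inner_gradient {d : ℕ} (f : EuclideanSpace ℝ (Fin d) → ℝ) (x v : EuclideanSpace ℝ (Fin d)) :
    ⟪gradient f x, v⟫ = fderiv ℝ f x v := by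
  rw [gradient]
  have := (InnerProductSpace.toDual ℝ (EuclideanSpace ℝ (Fin d))).apply_symm_apply (fderiv ℝ f x)
  conv_rhs => rw [← this]
  rfl

lemma norm_hess_le {d : ℕ} {U : EuclideanSpace ℝ (Fin d) → ℝ} (L3 : ℝ) (hL3 : 0 ≤ L3)
    (hlip3 : ∀ θ θ' : EuclideanSpace ℝ (Fin d), ‖grad U θ - grad U θ'‖ ≤ L3 * ‖θ - θ'‖)
    (θ : EuclideanSpace ℝ (Fin d)) : ‖hess U θ‖ ≤ L3 := by
  have hlip : LipschitzWith (Real.toNNReal L3) (fun x => gradient U x) := by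
    apply LipschitzWith.of_dist_le_mul
    intro x y
    rw [dist_eq_norm, dist_eq_norm]
    calc ‖gradient U x - gradient U y‖ ≤ L3 * ‖x - y‖ := hlip3 x y
      _ = (Real.toNNReal L3 : ℝ) * ‖x - y‖ := by rw [Real.coe_toNNReal L3 hL3]
  calc ‖hess U θ‖ = ‖fderiv ℝ (fun x => gradient U x) θ‖ := rfl
    _ ≤ (Real.toNNReal L3 : ℝ) := norm_fderiv_le_of_lipschitz ℝ hlip
    _ = L3 := Real.coe_toNNReal L3 hL3

lemma hessComp_entry_bound {d : ℕ} {U : EuclideanSpace ℝ (Fin d) → ℝ} (hU : ContDiff ℝ 3 U)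
    (L2 : ℝ) (hL2 : 0 ≤ L2)
    (hlip2 : ∀ θ θ' : EuclideanSpace ℝ (Fin d), ‖hess U θ - hess U θ'‖ ≤ L2 * ‖θ - θ'‖)
    (i j : Fin d) (θ : EuclideanSpace ℝ (Fin d)) :
    |hessComp U i θ (EuclideanSpace.single j 1) j| ≤ L2 := by
  have hgradU : ContDiff ℝ 2 (fun x => gradient U x) := contDiff_grad hU
  have hp : ContDiff ℝ 2 (fun y => gradient U y i) := by
    have hproj : ContDiff ℝ 2 (fun v : EuclideanSpace ℝ (Fin d) => v i) :=
      (EuclideanSpace.proj (𝕜 := ℝ) i).contDiff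
    exact hproj.comp hgradU
  have hg : ContDiff ℝ 1 (fun x => gradComp U i x) := by
    have h := hp.fderiv_right (m := 1) (by norm_num)
    have hc : ContDiff ℝ 1 (fun ℓ : EuclideanSpace ℝ (Fin d) →L[ℝ] ℝ =>
        (InnerProductSpace.toDual ℝ (EuclideanSpace ℝ (Fin d))).symm ℓ) :=
      (InnerProductSpace.toDual ℝ (EuclideanSpace ℝ (Fin d))).symm.toContinuousLinearEquiv.contDiff
    exact hc.comp h
  have hdg : Differentiable ℝ (fun x => gradComp U i x) := hg.differentiable (by norm_num)
  have step1 : hessComp U i θ (EuclideanSpace.single j 1) j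
      = fderiv ℝ (fun x => gradComp U i x j) θ (EuclideanSpace.single j 1) := by
    have hcomp : (fun x => gradComp U i x j)
        = (fun x => (EuclideanSpace.proj (𝕜 := ℝ) j) (gradComp U i x)) := rfl
    rw [hcomp, fderiv_comp' θ (EuclideanSpace.proj (𝕜 := ℝ) j).differentiableAt (hdg θ),
      ContinuousLinearMap.fderiv]
    rfl
  have step2 : (fun x => gradComp U i x j)
      = (fun x => hess U x (EuclideanSpace.single j 1) i) := by
    funext x
    have e1 : gradComp U i x j = ⟪gradComp U i x, EuclideanSpace.single j 1⟫ := by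
      rw [EuclideanSpace.inner_single_right]
      simp
    rw [e1]
    rw [show gradComp U i x = gradient (fun y => gradient U y i) x from rfl]
    rw [inner_gradient]
    have e2 : (fun y => gradient U y i)
        = (fun y => (EuclideanSpace.proj (𝕜 := ℝ) i) (gradient U y)) := rfl
    rw [e2, fderiv_comp' x (EuclideanSpace.proj (𝕜 := ℝ) i).differentiableAt
      ((hgradU.differentiable (by norm_num)) x), ContinuousLinearMap.fderiv]
    rfl
  have hlipF : LipschitzWith (Real.toNNReal L2)
      (fun x => hess U x (EuclideanSpace.single j 1) i) := by
    apply LipschitzWith.of_dist_le_mul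
    intro x y
    rw [Real.dist_eq, dist_eq_norm, Real.coe_toNNReal L2 hL2]
    have e3 : hess U x (EuclideanSpace.single j 1) i - hess U y (EuclideanSpace.single j 1) i
        = ((hess U x - hess U y) (EuclideanSpace.single j 1)) i := by
      simp [ContinuousLinearMap.sub_apply]
    rw [e3]
    calc |((hess U x - hess U y) (EuclideanSpace.single j 1)) i|
        ≤ ‖(hess U x - hess U y) (EuclideanSpace.single j 1)‖ :=
          euclid_abs_comp_le_norm _ i
      _ ≤ ‖hess U x - hess U y‖ * ‖EuclideanSpace.single j (1:ℝ)‖ :=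
          ContinuousLinearMap.le_opNorm _ _
      _ = ‖hess U x - hess U y‖ := by rw [EuclideanSpace.norm_single]; simp
      _ ≤ L2 * ‖x - y‖ := hlip2 x y
  rw [step1, step2]
  calc |fderiv ℝ (fun x => hess U x (EuclideanSpace.single j 1) i) θ (EuclideanSpace.single j 1)|
      ≤ ‖fderiv ℝ (fun x => hess U x (EuclideanSpace.single j 1) i) θ‖
        * ‖EuclideanSpace.single j (1:ℝ)‖ := by
        rw [← Real.norm_eq_abs]
        exact ContinuousLinearMap.le_opNorm _ _
    _ ≤ (Real.toNNReal L2 : ℝ) * 1 := by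
        apply mul_le_mul (norm_fderiv_le_of_lipschitz ℝ hlipF) _ (norm_nonneg _)
          (Real.toNNReal L2).coe_nonneg
        rw [EuclideanSpace.norm_single]; simp
    _ = L2 := by rw [Real.coe_toNNReal L2 hL2, mul_one]

lemma norm_le_of_comp_le {d : ℕ} (hd : 1 ≤ d) (C : ℝ) (hC : 0 ≤ C)
    (w : EuclideanSpace ℝ (Fin d)) (hw : ∀ i, |w i| ≤ (d:ℝ) * C) :
    ‖w‖ ≤ (d:ℝ) * ((d:ℝ) * C) := by
  rw [EuclideanSpace.norm_eq]
  have h1 : ∑ i, ‖w i‖^2 ≤ ∑ _i : Fin d, ((d:ℝ) * C)^2 := by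
    apply Finset.sum_le_sum
    intro i _
    rw [Real.norm_eq_abs]
    have := hw i
    nlinarith [abs_nonneg (w i)]
  calc Real.sqrt (∑ i, ‖w i‖^2) ≤ Real.sqrt (∑ _i : Fin d, ((d:ℝ) * C)^2) :=
        Real.sqrt_le_sqrt h1
    _ = Real.sqrt ((d : ℝ) * ((d:ℝ) * C)^2) := by rw [Finset.sum_const]; simp [nsmul_eq_mul]
    _ ≤ Real.sqrt ((d : ℝ)^2 * ((d:ℝ) * C)^2) := by
        apply Real.sqrt_le_sqrt
        have hd' : (1:ℝ) ≤ (d:ℝ) := by exact_mod_cast hd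
        have : (d:ℝ) ≤ (d:ℝ)^2 := by nlinarith
        nlinarith [sq_nonneg ((d:ℝ) * C)]
    _ = (d : ℝ) * ((d:ℝ) * C) := by
        rw [show (d:ℝ)^2 * ((d:ℝ) * C)^2 = ((d:ℝ) * ((d:ℝ)*C))^2 by ring]
        rw [Real.sqrt_sq (by positivity)]

lemma norm_vecLap_le {d : ℕ} {U : EuclideanSpace ℝ (Fin d) → ℝ} (hd : 1 ≤ d)
    (hU : ContDiff ℝ 3 U) (L2 : ℝ) (hL2 : 0 ≤ L2)
    (hlip2 : ∀ θ θ' : EuclideanSpace ℝ (Fin d), ‖hess U θ - hess U θ'‖ ≤ L2 * ‖θ - θ'‖)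
    (θ : EuclideanSpace ℝ (Fin d)) :
    ‖vecLap U θ‖ ≤ (d:ℝ) * ((d:ℝ) * L2) := by
  apply norm_le_of_comp_le hd L2 hL2
  intro i
  have hcomp : (vecLap U θ) i = ∑ j, hessComp U i θ (EuclideanSpace.single j 1) j := rfl
  rw [hcomp]
  calc |∑ j, hessComp U i θ (EuclideanSpace.single j 1) j|
      ≤ ∑ j, |hessComp U i θ (EuclideanSpace.single j 1) j| :=
        Finset.abs_sum_le_sum_abs _ _
    _ ≤ ∑ _j : Fin d, L2 := Finset.sum_le_sum fun j _ =>
        hessComp_entry_bound hU L2 hL2 hlip2 i j θ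
    _ = (d:ℝ) * L2 := by rw [Finset.sum_const]; simp [nsmul_eq_mul]

/-! ### Step size facts -/

lemma lam_facts (abar L3 K1 lam : ℝ) (habar : 0 < abar) (hL3 : 0 < L3) (hK1 : L3 ≤ K1)
    (hlam : 0 < lam) (hle : lam ≤ lamMaxLin abar L3 K1) :
    lam ≤ 1 ∧ lam * abar ≤ 1 ∧ lam * (L3 * K1) ≤ abar / 16 ∧ lam * K1^2 ≤ abar / 16 ∧
      lam^3 * (L3^2 * K1^2) ≤ abar / 4 := by
  have hK1pos : 0 < K1 := lt_of_lt_of_le hL3 hK1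
  unfold lamMaxLin at hle
  obtain ⟨h1, hle⟩ := le_min_iff.mp hle |>.imp id id
  obtain ⟨h2, hle⟩ := le_min_iff.mp hle |>.imp id id
  obtain ⟨h3, hle⟩ := le_min_iff.mp hle |>.imp id id
  obtain ⟨h4, hle⟩ := le_min_iff.mp hle |>.imp id id
  obtain ⟨h5, _h6⟩ := le_min_iff.mp hle |>.imp id id
  refine ⟨h1, ?_, ?_, ?_, ?_⟩
  · calc lam * abar ≤ abar⁻¹ * abar := mul_le_mul_of_nonneg_right h2 habar.le
      _ = 1 := inv_mul_cancel₀ habar.ne'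
  · have h3' := (le_div_iff₀ (show (0:ℝ) < 16 * L3 * K1 by positivity)).mp h3
    nlinarith
  · have h4' := (le_div_iff₀ (show (0:ℝ) < 16 * K1 ^ 2 by positivity)).mp h4
    nlinarith
  · have hA : (abar ^ ((1:ℝ)/3)) ^ (3:ℕ) = abar := by
      rw [← Real.rpow_natCast (abar ^ ((1:ℝ)/3)) 3, ← Real.rpow_mul habar.le]
      norm_num
    have hB : ((4 * L3 ^ 2 * K1 ^ 2 : ℝ) ^ ((1:ℝ)/3)) ^ (3:ℕ) = 4 * L3 ^ 2 * K1 ^ 2 := by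
      rw [← Real.rpow_natCast ((4 * L3 ^ 2 * K1 ^ 2 : ℝ) ^ ((1:ℝ)/3)) 3,
        ← Real.rpow_mul (by positivity)]
      norm_num
    have hcube : lam ^ 3 ≤ abar / (4 * L3 ^ 2 * K1 ^ 2) := by
      calc lam ^ 3
          ≤ (abar ^ ((1:ℝ)/3) / (4 * L3 ^ 2 * K1 ^ 2) ^ ((1:ℝ)/3)) ^ (3:ℕ) :=
            pow_le_pow_left₀ hlam.le h5 3
        _ = (abar ^ ((1:ℝ)/3)) ^ (3:ℕ) / ((4 * L3 ^ 2 * K1 ^ 2 : ℝ) ^ ((1:ℝ)/3)) ^ (3:ℕ) :=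
            div_pow _ _ 3
        _ = abar / (4 * L3 ^ 2 * K1 ^ 2) := by rw [hA, hB]
    have hcube' := (le_div_iff₀ (show (0:ℝ) < 4 * L3 ^ 2 * K1 ^ 2 by positivity)).mp hcube
    nlinarith

/-! ### The key real inequality -/

lemma keyineq (abar bbar L3 K1 c e lam r : ℝ)
    (habar : 0 < abar) (hb : 0 ≤ bbar) (hL3 : 0 < L3) (hK1 : L3 ≤ K1) (hc : 0 ≤ c) (he : 0 ≤ e)
    (hr : 0 ≤ r) (hlam : 0 < lam) (h1 : lam ≤ 1) (h2 : lam * abar ≤ 1)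
    (h3 : lam * (L3 * K1) ≤ abar / 16) (h4 : lam * K1 ^ 2 ≤ abar / 16)
    (h5 : lam ^ 3 * (L3 ^ 2 * K1 ^ 2) ≤ abar / 4) :
    r^2 + 2 * (lam * (-(abar * r^2) + bbar + (lam/2) * (r * (L3 * (K1 * (1+r))) + c * r)))
      + lam^2 * (K1 * (1+r) + (lam/2) * (L3 * (K1 * (1+r)) + c))^2 + 2 * lam * e
    ≤ (1 - lam * abar) * r^2
      + lam * (2*bbar + 2*e + abar + c^2/abar + c^2 + 1) := by
  have hK1pos : 0 < K1 := lt_of_lt_of_le hL3 hK1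
  have hlamK1 : lam * K1 ≤ 1/4 := by
    have hs : (lam * K1)^2 ≤ 1/16 := by
      have e0 : (lam * K1)^2 = lam * (lam * K1^2) := by ring
      rw [e0]
      calc lam * (lam * K1^2) ≤ lam * (abar/16) :=
            mul_le_mul_of_nonneg_left h4 hlam.le
        _ = (lam * abar)/16 := by ring
        _ ≤ 1/16 := by linarith
    nlinarith [mul_nonneg hlam.le hK1pos.le]
  set Φ : ℝ := K1 * (1+r) + (lam/2) * (L3 * (K1 * (1+r)) + c) with hΦdef
  have hi : lam * (r * (L3 * (K1 * (1+r)))) ≤ abar/32 + (3*abar/32) * r^2 := by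
    have e1 : lam * (r * (L3 * (K1 * (1+r)))) = (lam * (L3 * K1)) * (r + r^2) := by ring
    have e2 : (lam * (L3 * K1)) * (r + r^2) ≤ (abar/16) * (r + r^2) :=
      mul_le_mul_of_nonneg_right h3 (by positivity)
    have e3 : r + r^2 ≤ 1/2 + (3/2) * r^2 := by nlinarith [sq_nonneg (1-r)]
    nlinarith
  have hii : lam * (c * r) ≤ (abar/4) * r^2 + c^2/abar := by
    have e1 : lam * (c * r) ≤ c * r := by nlinarith [mul_nonneg hc hr]
    have e2 : (abar/4) * r^2 + c^2/abar - c * r = (abar * r/2 - c)^2 / abar := by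
      field_simp; ring
    nlinarith [sq_nonneg (abar * r/2 - c), div_nonneg (sq_nonneg (abar * r/2 - c)) habar.le]
  have hiii : lam * Φ^2 ≤ (9*abar/16) * (1 + r^2) + c^2/2 := by
    have eΦ : Φ = K1 * (1+r) * (1 + lam * L3/2) + lam * c/2 := by rw [hΦdef]; ring
    have hsq : Φ^2 ≤ 2 * ((K1 * (1 + lam * L3/2))^2 * (1+r)^2) + 2 * (lam * c/2)^2 := by
      rw [eΦ]
      nlinarith [sq_nonneg (K1 * (1+r) * (1 + lam * L3/2) - lam * c/2)]
    have hD : lam * (2 * (K1 * (1 + lam * L3/2))^2) ≤ 9*abar/32 := by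
      have ex : lam * (2 * (K1 * (1 + lam * L3/2))^2)
          = 2 * (lam * K1^2) + 2 * ((lam * K1) * (lam * (L3 * K1)))
            + (lam^3 * (L3^2 * K1^2))/2 := by ring
      rw [ex]
      have p1 : (lam * K1) * (lam * (L3 * K1)) ≤ (1/4) * (abar/16) := by
        have hx : 0 ≤ lam * K1 := by positivity
        have hy : 0 ≤ lam * (L3 * K1) := by positivity
        nlinarith
      linarith [h4, h5]
    have hcube : lam^3 ≤ 1 := pow_le_one₀ hlam.le h1
    have hr2 : (1+r)^2 ≤ 2 + 2 * r^2 := by nlinarith [sq_nonneg (1-r)]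
    have step : lam * Φ^2 ≤ (lam * (2 * (K1 * (1 + lam * L3/2))^2)) * (1+r)^2
        + lam^3 * c^2 / 2 := by
      have := mul_le_mul_of_nonneg_left hsq hlam.le
      nlinarith [this]
    calc lam * Φ^2 ≤ (lam * (2 * (K1 * (1 + lam * L3/2))^2)) * (1+r)^2 + lam^3 * c^2/2 := step
      _ ≤ (9*abar/32) * (1+r)^2 + c^2/2 := by
          have h6 : (lam * (2 * (K1 * (1 + lam * L3/2))^2)) * (1+r)^2 ≤ (9*abar/32) * (1+r)^2 :=
            mul_le_mul_of_nonneg_right hD (sq_nonneg _)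
          have h7 : lam^3 * c^2/2 ≤ c^2/2 := by nlinarith [sq_nonneg c]
          linarith
      _ ≤ (9*abar/16) * (1 + r^2) + c^2/2 := by nlinarith [hr2, habar]
  have H : lam * ((r * (L3 * (K1 * (1+r))) + c * r) + Φ^2)
      ≤ abar * r^2 + (abar + c^2/abar + c^2 + 1) := by
    have expand : lam * ((r * (L3 * (K1 * (1+r))) + c * r) + Φ^2)
        = lam * (r * (L3 * (K1 * (1+r)))) + lam * (c * r) + lam * Φ^2 := by ring
    rw [expand]
    nlinarith [hi, hii, hiii, sq_nonneg r, sq_nonneg c, habar.le]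
  have H' := mul_le_mul_of_nonneg_left H hlam.le
  nlinarith [H']

end AhollaAux

/-- key one-step estimate in the proof of Lemma `lem:2ndpthmmtlip` of the
paper: one-step second moment bound for the aHOLLA update. -/
theorem aholla_one_step_second_moment
    (d : ℕ) (hd : 1 ≤ d)
    (β q : ℝ) (hβ : 0 < β) (hq0 : 0 < q) (hq1 : q ≤ 1)
    (U : EuclideanSpace ℝ (Fin d) → ℝ) (hU : ContDiff ℝ 3 U)
    -- Assumption ALLlip
    (L1 L2 L3 : ℝ) (hL1 : 0 < L1) (hL2 : 0 < L2) (hL3 : 0 < L3)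
    (hlip1 : ∀ (i : Fin d) (θ θ' : EuclideanSpace ℝ (Fin d)),
      ‖hessComp U i θ - hessComp U i θ'‖ ≤ L1 * ‖θ - θ'‖ ^ q)
    (hlip2 : ∀ θ θ' : EuclideanSpace ℝ (Fin d), ‖hess U θ - hess U θ'‖ ≤ L2 * ‖θ - θ'‖)
    (hlip3 : ∀ θ θ' : EuclideanSpace ℝ (Fin d), ‖grad U θ - grad U θ'‖ ≤ L3 * ‖θ - θ'‖)
    -- Assumption ADlip
    (abar bbar : ℝ) (habar : 0 < abar) (hbbar : 0 < bbar)
    (hAD : ∀ θ : EuclideanSpace ℝ (Fin d), abar * ‖θ‖ ^ 2 - bbar ≤ ⟪θ, grad U θ⟫) :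
    ∃ c0 : ℝ, 0 < c0 ∧
      ∀ θ : EuclideanSpace ℝ (Fin d),
        ∀ lam : ℝ, 0 < lam → lam ≤ lamMaxLin abar L3 (max L3 ‖grad U 0‖) →
          ∀ T : EuclideanSpace ℝ (Fin d) →L[ℝ] EuclideanSpace ℝ (Fin d),
            IsPsdSqrt T (hollaCov U lam θ) →
            (∫⁻ x, (‖θ + lam • hollaDrift U β lam θ
                  + Real.sqrt (2 * lam * β⁻¹) • T x‖₊ : ℝ≥0∞) ^ (2 : ℕ) ∂(stdGaussian d))
              ≤ ENNReal.ofReal ((1 - lam * abar) * ‖θ‖ ^ 2 + lam * c0) := by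
  classical
  set K1 : ℝ := max L3 ‖grad U 0‖ with hK1def
  set CY : ℝ := (d:ℝ) * ((d:ℝ) * L2) with hCYdef
  set c : ℝ := β⁻¹ * CY with hcdef
  set Mb : ℝ := 1 + L3 + L3^2 with hMbdef
  set e : ℝ := β⁻¹ * (AhollaAux.m2gauss * ((d:ℝ) * Mb)) with hedef
  have hK1 : L3 ≤ K1 := le_max_left _ _
  have hK1pos : 0 < K1 := lt_of_lt_of_le hL3 hK1
  have hCY : 0 ≤ CY := by positivity
  have hc : 0 ≤ c := by positivity
  have hMb : 0 < Mb := by positivity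
  have hβ' : (0:ℝ) ≤ β⁻¹ := by positivity
  have hm2 : 0 ≤ AhollaAux.m2gauss := AhollaAux.m2gauss_nonneg
  have he : 0 ≤ e := by
    apply mul_nonneg hβ'
    apply mul_nonneg hm2
    positivity
  refine ⟨2*bbar + 2*e + abar + c^2/abar + c^2 + 1, ?_, ?_⟩
  · have h1 : 0 ≤ c^2/abar := by positivity
    have h2 : 0 ≤ c^2 := sq_nonneg c
    nlinarith
  intro θ lam hlam hlamle T hT
  obtain ⟨hsymm, _hpos, hTT⟩ := hT
  obtain ⟨hl1, hl2, hl3, hl4, hl5⟩ :=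
    AhollaAux.lam_facts abar L3 K1 lam habar hL3 hK1 hlam hlamle
  have hr : (0:ℝ) ≤ ‖θ‖ := norm_nonneg θ
  have hgrowth : ∀ x : EuclideanSpace ℝ (Fin d), ‖grad U x‖ ≤ K1 * (1 + ‖x‖) := by
    intro x
    have hgrad0 : ‖grad U 0‖ ≤ K1 := le_max_right _ _
    calc ‖grad U x‖ = ‖(grad U x - grad U 0) + grad U 0‖ := by rw [sub_add_cancel]
      _ ≤ ‖grad U x - grad U 0‖ + ‖grad U 0‖ := norm_add_le _ _
      _ ≤ L3 * ‖x - (0 : EuclideanSpace ℝ (Fin d))‖ + K1 := by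
          have := hlip3 x 0; linarith
      _ = L3 * ‖x‖ + K1 := by rw [sub_zero]
      _ ≤ K1 * (1 + ‖x‖) := by nlinarith [norm_nonneg x]
  have hHop : ‖hess U θ‖ ≤ L3 := AhollaAux.norm_hess_le L3 hL3.le hlip3 θ
  have hHh : ‖hess U θ (grad U θ)‖ ≤ L3 * (K1 * (1 + ‖θ‖)) := by
    calc ‖hess U θ (grad U θ)‖ ≤ ‖hess U θ‖ * ‖grad U θ‖ :=
          ContinuousLinearMap.le_opNorm _ _
      _ ≤ L3 * (K1 * (1 + ‖θ‖)) :=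
          mul_le_mul hHop (hgrowth θ) (norm_nonneg _) hL3.le
  have hlap : ‖vecLap U θ‖ ≤ CY := AhollaAux.norm_vecLap_le hd hU L2 hL2.le hlip2 θ
  -- inner product bound for the drift
  have hADθ := hAD θ
  have hinner : ⟪θ, hollaDrift U β lam θ⟫
      ≤ -(abar * ‖θ‖^2) + bbar
        + (lam/2) * (‖θ‖ * (L3 * (K1 * (1 + ‖θ‖))) + c * ‖θ‖) := by
    have hsplit : ⟪θ, hollaDrift U β lam θ⟫
        = -⟪θ, grad U θ⟫
          + (lam/2) * (⟪θ, hess U θ (grad U θ)⟫ - β⁻¹ * ⟪θ, vecLap U θ⟫) := by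
      rw [hollaDrift, inner_add_right, inner_neg_right, real_inner_smul_right,
        inner_sub_right, real_inner_smul_right]
    rw [hsplit]
    have b1 : -⟪θ, grad U θ⟫ ≤ -(abar * ‖θ‖^2) + bbar := by linarith
    have b2 : ⟪θ, hess U θ (grad U θ)⟫ ≤ ‖θ‖ * (L3 * (K1 * (1 + ‖θ‖))) := by
      calc ⟪θ, hess U θ (grad U θ)⟫ ≤ ‖θ‖ * ‖hess U θ (grad U θ)‖ :=
            real_inner_le_norm _ _
        _ ≤ ‖θ‖ * (L3 * (K1 * (1 + ‖θ‖))) := mul_le_mul_of_nonneg_left hHh hr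
    have b3 : -(β⁻¹ * ⟪θ, vecLap U θ⟫) ≤ c * ‖θ‖ := by
      have habs : |⟪θ, vecLap U θ⟫| ≤ ‖θ‖ * CY := by
        calc |⟪θ, vecLap U θ⟫| ≤ ‖θ‖ * ‖vecLap U θ‖ := abs_real_inner_le_norm _ _
          _ ≤ ‖θ‖ * CY := mul_le_mul_of_nonneg_left hlap hr
      have h1 : -⟪θ, vecLap U θ⟫ ≤ ‖θ‖ * CY := by
        have := neg_abs_le ⟪θ, vecLap U θ⟫; linarith
      calc -(β⁻¹ * ⟪θ, vecLap U θ⟫) = β⁻¹ * (-⟪θ, vecLap U θ⟫) := by ring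
        _ ≤ β⁻¹ * (‖θ‖ * CY) := mul_le_mul_of_nonneg_left h1 hβ'
        _ = c * ‖θ‖ := by rw [hcdef]; ring
    have b4 : ⟪θ, hess U θ (grad U θ)⟫ - β⁻¹ * ⟪θ, vecLap U θ⟫
        ≤ ‖θ‖ * (L3 * (K1 * (1 + ‖θ‖))) + c * ‖θ‖ := by linarith
    have hmul := mul_le_mul_of_nonneg_left b4 (by positivity : (0:ℝ) ≤ lam/2)
    linarith
  -- norm bound for the drift
  have hndrift : ‖hollaDrift U β lam θ‖
      ≤ K1 * (1 + ‖θ‖) + (lam/2) * (L3 * (K1 * (1 + ‖θ‖)) + c) := by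
    have h1 : ‖hess U θ (grad U θ) - β⁻¹ • vecLap U θ‖
        ≤ L3 * (K1 * (1 + ‖θ‖)) + c := by
      have h2 : ‖(β⁻¹ : ℝ) • vecLap U θ‖ = β⁻¹ * ‖vecLap U θ‖ := by
        rw [norm_smul, Real.norm_eq_abs, abs_of_nonneg hβ']
      have h3 : β⁻¹ * ‖vecLap U θ‖ ≤ c := by
        rw [hcdef]; exact mul_le_mul_of_nonneg_left hlap hβ'
      calc ‖hess U θ (grad U θ) - β⁻¹ • vecLap U θ‖
          ≤ ‖hess U θ (grad U θ)‖ + ‖(β⁻¹ : ℝ) • vecLap U θ‖ := norm_sub_le _ _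
        _ ≤ L3 * (K1 * (1 + ‖θ‖)) + c := by rw [h2]; linarith
    calc ‖hollaDrift U β lam θ‖
        ≤ ‖-grad U θ‖ + ‖(lam/2) • (hess U θ (grad U θ) - β⁻¹ • vecLap U θ)‖ := by
          rw [hollaDrift]; exact norm_add_le _ _
      _ = ‖grad U θ‖ + (lam/2) * ‖hess U θ (grad U θ) - β⁻¹ • vecLap U θ‖ := by
          rw [norm_neg, norm_smul, Real.norm_eq_abs,
            abs_of_nonneg (by positivity : (0:ℝ) ≤ lam/2)]
      _ ≤ K1 * (1 + ‖θ‖) + (lam/2) * (L3 * (K1 * (1 + ‖θ‖)) + c) := by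
          have := mul_le_mul_of_nonneg_left h1 (by positivity : (0:ℝ) ≤ lam/2)
          have := hgrowth θ
          linarith
  -- bound on the diffusion coefficient
  have hMnorm : ‖hollaCov U lam θ‖ ≤ Mb := by
    have hid : ‖ContinuousLinearMap.id ℝ (EuclideanSpace ℝ (Fin d))‖ ≤ 1 :=
      ContinuousLinearMap.norm_id_le
    have hsm : ‖lam • hess U θ‖ = lam * ‖hess U θ‖ := by
      rw [norm_smul lam (hess U θ), Real.norm_eq_abs, abs_of_pos hlam]
    have hsm2 : ‖(lam^2/3) • ((hess U θ).comp (hess U θ))‖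
        ≤ (lam^2/3) * ‖(hess U θ).comp (hess U θ)‖ := by
      have h := norm_smul_le (lam^2/3) ((hess U θ).comp (hess U θ))
      rwa [Real.norm_eq_abs, abs_of_nonneg (by positivity : (0:ℝ) ≤ lam^2/3)] at h
    have hcm : ‖(hess U θ).comp (hess U θ)‖ ≤ ‖hess U θ‖ * ‖hess U θ‖ :=
      ContinuousLinearMap.opNorm_comp_le _ _
    have hnn := norm_nonneg (hess U θ)
    calc ‖hollaCov U lam θ‖
        ≤ ‖ContinuousLinearMap.id ℝ (EuclideanSpace ℝ (Fin d)) - lam • hess U θ‖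
          + ‖(lam^2/3) • ((hess U θ).comp (hess U θ))‖ := by
          rw [hollaCov]
          have e0 : (lam ^ 2 / 3 : ℝ) • ((hess U θ).comp (hess U θ))
              = (lam ^ 2 / 3) • ((hess U θ).comp (hess U θ)) := rfl
          exact norm_add_le _ _
      _ ≤ (1 + lam * ‖hess U θ‖) + (lam^2/3) * (‖hess U θ‖ * ‖hess U θ‖) := by
          have h1 := norm_sub_le (ContinuousLinearMap.id ℝ (EuclideanSpace ℝ (Fin d)))
            (lam • hess U θ)
          have h2 : (lam^2/3) * ‖(hess U θ).comp (hess U θ)‖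
              ≤ (lam^2/3) * (‖hess U θ‖ * ‖hess U θ‖) :=
            mul_le_mul_of_nonneg_left hcm (by positivity)
          rw [hsm] at h1
          linarith [hsm2, h2, h1, hid]
      _ ≤ Mb := by
          rw [hMbdef]
          have hlamsq : lam^2 ≤ 1 := by nlinarith
          have hH2 : ‖hess U θ‖ * ‖hess U θ‖ ≤ L3^2 := by nlinarith
          have ha : lam * ‖hess U θ‖ ≤ L3 := by nlinarith
          nlinarith [sq_nonneg L3]
  have hTj : ∀ j : Fin d, ‖T (EuclideanSpace.single j 1)‖^2 ≤ Mb := by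
    intro j
    have hw1 : ‖EuclideanSpace.single j (1:ℝ)‖ = 1 := by
      rw [EuclideanSpace.norm_single]; simp
    have h1 : ‖T (EuclideanSpace.single j 1)‖^2
        = ⟪T (EuclideanSpace.single j 1), T (EuclideanSpace.single j 1)⟫ :=
      (real_inner_self_eq_norm_sq _).symm
    have h2 := hsymm (EuclideanSpace.single j 1) (T (EuclideanSpace.single j 1))
    have h3 : T (T (EuclideanSpace.single j 1))
        = hollaCov U lam θ (EuclideanSpace.single j 1) := by
      rw [← hTT]; rfl
    calc ‖T (EuclideanSpace.single j 1)‖^2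
        = ⟪(EuclideanSpace.single j 1 : EuclideanSpace ℝ (Fin d)),
            hollaCov U lam θ (EuclideanSpace.single j 1)⟫ := by rw [h1, h2, h3]
      _ ≤ ‖(EuclideanSpace.single j 1 : EuclideanSpace ℝ (Fin d))‖
          * ‖hollaCov U lam θ (EuclideanSpace.single j 1)‖ := real_inner_le_norm _ _
      _ ≤ ‖(EuclideanSpace.single j 1 : EuclideanSpace ℝ (Fin d))‖
          * (‖hollaCov U lam θ‖ * ‖(EuclideanSpace.single j 1 : EuclideanSpace ℝ (Fin d))‖) :=
          mul_le_mul_of_nonneg_left (ContinuousLinearMap.le_opNorm _ _) (norm_nonneg _)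
      _ = ‖hollaCov U lam θ‖ := by rw [hw1]; ring
      _ ≤ Mb := hMnorm
  have hsumT : ∑ j, ‖T (EuclideanSpace.single j 1)‖^2 ≤ (d:ℝ) * Mb := by
    calc ∑ j, ‖T (EuclideanSpace.single j 1)‖^2 ≤ ∑ _j : Fin d, Mb :=
          Finset.sum_le_sum fun j _ => hTj j
      _ = (d:ℝ) * Mb := by rw [Finset.sum_const]; simp [nsmul_eq_mul]
  have hsumTnn : 0 ≤ ∑ j, ‖T (EuclideanSpace.single j 1)‖^2 :=
    Finset.sum_nonneg fun j _ => sq_nonneg _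
  -- main computation
  rw [AhollaAux.gauss_quad d (θ + lam • hollaDrift U β lam θ) (Real.sqrt (2 * lam * β⁻¹)) T]
  apply ENNReal.ofReal_le_ofReal
  have hs2 : Real.sqrt (2 * lam * β⁻¹)^2 = 2 * lam * β⁻¹ := Real.sq_sqrt (by positivity)
  have hGauss : Real.sqrt (2 * lam * β⁻¹)^2 * AhollaAux.m2gauss
        * ∑ j, ‖T (EuclideanSpace.single j 1)‖^2 ≤ 2 * lam * e := by
    rw [hs2]
    have h1 : 2 * lam * β⁻¹ * AhollaAux.m2gauss * (∑ j, ‖T (EuclideanSpace.single j 1)‖^2)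
        ≤ 2 * lam * β⁻¹ * AhollaAux.m2gauss * ((d:ℝ) * Mb) := by
      apply mul_le_mul_of_nonneg_left hsumT
      have : (0:ℝ) ≤ 2 * lam := by positivity
      exact mul_nonneg (mul_nonneg this hβ') hm2
    calc 2 * lam * β⁻¹ * AhollaAux.m2gauss * (∑ j, ‖T (EuclideanSpace.single j 1)‖^2)
        ≤ 2 * lam * β⁻¹ * AhollaAux.m2gauss * ((d:ℝ) * Mb) := h1
      _ = 2 * lam * e := by rw [hedef]; ring
  have hexp : ‖θ + lam • hollaDrift U β lam θ‖^2
      = ‖θ‖^2 + 2 * (lam * ⟪θ, hollaDrift U β lam θ⟫)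
        + lam^2 * ‖hollaDrift U β lam θ‖^2 := by
    rw [norm_add_sq_real, real_inner_smul_right, norm_smul, Real.norm_eq_abs,
      abs_of_pos hlam, mul_pow]
  have hdriftsq : ‖hollaDrift U β lam θ‖^2
      ≤ (K1 * (1 + ‖θ‖) + (lam/2) * (L3 * (K1 * (1 + ‖θ‖)) + c))^2 :=
    pow_le_pow_left₀ (norm_nonneg _) hndrift 2
  have KEY := AhollaAux.keyineq abar bbar L3 K1 c e lam ‖θ‖ habar hbbar.le hL3 hK1 hc he
    hr hlam hl1 hl2 hl3 hl4 hl5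
  have t1 : 2 * (lam * ⟪θ, hollaDrift U β lam θ⟫)
      ≤ 2 * (lam * (-(abar * ‖θ‖^2) + bbar
        + (lam/2) * (‖θ‖ * (L3 * (K1 * (1 + ‖θ‖))) + c * ‖θ‖))) := by
    have := mul_le_mul_of_nonneg_left hinner hlam.le
    linarith
  have t2 : lam^2 * ‖hollaDrift U β lam θ‖^2
      ≤ lam^2 * (K1 * (1 + ‖θ‖) + (lam/2) * (L3 * (K1 * (1 + ‖θ‖)) + c))^2 :=
    mul_le_mul_of_nonneg_left hdriftsq (sq_nonneg lam)
  rw [hexp]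
  linarith [KEY, t1, t2, hGauss]
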